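/- The uniform B-spline two-scale relation holds: B_0^p(ξ) = Σ_{j=0}^{p+1} s_j^p · B_0^p(2ξ - j), where s_j^p = 2^{-p} · binomial(p+1, j), for every degree p ≥ 0 and all real ξ. -/

import Mathlib

open Finset

lemma shift_sum (s n : ℕ) (F g : ℕ → ℝ) :
    ∑ k ∈ Finset.range (n + s), (if s ≤ k then F (k - s) else 0) * g k
      = ∑ j ∈ Finset.range n, F j * g (j + s) := by
  rw [Finset.range_eq_Ico, ← Finset.sum_Ico_consecutive _ (Nat.zero_le s) (Nat.le_add_left s n)]
  have h1 : ∑ k ∈ Finset.Ico 0 s, (if s ≤ k then F (k - s) else 0) * g k = 0 := by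
    apply Finset.sum_eq_zero
    intro k hk
    simp only [Finset.mem_Ico] at hk
    rw [if_neg (by omega)]
    ring
  rw [h1, zero_add, Finset.sum_Ico_eq_sum_range]
  simp only [Nat.add_sub_cancel]
  apply Finset.sum_congr rfl
  intro i _
  rw [if_pos (by omega)]
  congr 1
  · congr 1; omega
  · congr 1; omega

lemma absorb (n k : ℕ) :
    ((k : ℝ) + 1) * (Nat.choose n (k+1) : ℝ) = ((n : ℝ) - k) * (Nat.choose n k : ℝ) := by
  rcases le_or_gt (k+1) n with h | h
  · have := Nat.choose_succ_right_eq n k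
    have hc : ((Nat.choose n (k+1) * (k+1) : ℕ) : ℝ) = ((Nat.choose n k * (n - k) : ℕ) : ℝ) := by
      exact_mod_cast congrArg Nat.cast this
    push_cast [Nat.cast_sub (by omega : k ≤ n)] at hc
    linarith
  · rw [Nat.choose_eq_zero_of_lt h]
    rcases le_or_gt k n with h2 | h2
    · have : k = n := by omega
      subst this; simp
    · rw [Nat.choose_eq_zero_of_lt h2]; simp

lemma coef_eq (p : ℕ) (ξ : ℝ) (k : ℕ) :
    ξ/((p:ℝ)+1) * (((2:ℝ)^p)⁻¹ * (Nat.choose (p+1) k : ℝ))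
      + (if 2 ≤ k then (((p:ℝ)+2-ξ)/((p:ℝ)+1)) * (((2:ℝ)^p)⁻¹ * (Nat.choose (p+1) (k-2) : ℝ)) else 0)
    = ((2:ℝ)^(p+1))⁻¹ * (Nat.choose (p+2) k : ℝ) * ((2*ξ-(k:ℝ))/((p:ℝ)+1))
      + (if 1 ≤ k then ((2:ℝ)^(p+1))⁻¹ * (Nat.choose (p+2) (k-1) : ℝ) * (((p:ℝ)+2-(2*ξ-((k-1 : ℕ):ℝ)))/((p:ℝ)+1)) else 0) := by
  have hp : ((p:ℝ)+1) ≠ 0 := by positivity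
  have h2 : ((2:ℝ)^p) ≠ 0 := by positivity
  rw [pow_succ]
  match k with
  | 0 =>
    norm_num
    field_simp
  | 1 =>
    norm_num [Nat.choose_one_right]
    field_simp
    ring
  | (m+2) =>
    rw [if_pos (by omega), if_pos (by omega)]
    simp only [Nat.add_sub_cancel, show m+2-1 = m+1 from rfl]
    have hA : (Nat.choose (p+2) (m+2) : ℝ) = (Nat.choose (p+1) (m+1) : ℝ) + (Nat.choose (p+1) (m+2) : ℝ) := by
      rw [show p+2 = (p+1)+1 from rfl, Nat.choose_succ_succ (p+1) (m+1)]; push_cast; ring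
    have hB : (Nat.choose (p+2) (m+1) : ℝ) = (Nat.choose (p+1) m : ℝ) + (Nat.choose (p+1) (m+1) : ℝ) := by
      rw [show p+2 = (p+1)+1 from rfl, Nat.choose_succ_succ (p+1) m]; push_cast; ring
    have habs1 := absorb (p+1) (m+1)
    have habs2 := absorb (p+1) m
    push_cast at habs1 habs2 ⊢
    rw [hA, hB]
    field_simp
    linear_combination habs1 - habs2

lemma key (p : ℕ) (ξ : ℝ) (g : ℕ → ℝ) :
    ξ/((p:ℝ)+1) * ∑ j ∈ Finset.range (p+2), ((2:ℝ)^p)⁻¹ * (Nat.choose (p+1) j : ℝ) * g j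
      + (((p:ℝ)+2-ξ)/((p:ℝ)+1)) * ∑ j ∈ Finset.range (p+2), ((2:ℝ)^p)⁻¹ * (Nat.choose (p+1) j : ℝ) * g (j+2)
    = ∑ j ∈ Finset.range (p+3), ((2:ℝ)^(p+1))⁻¹ * (Nat.choose (p+2) j : ℝ) *
        ((2*ξ-(j:ℝ))/((p:ℝ)+1) * g j + (((p:ℝ)+2-(2*ξ-(j:ℝ)))/((p:ℝ)+1)) * g (j+1)) := by
  have e1 : ξ/((p:ℝ)+1) * ∑ j ∈ Finset.range (p+2), ((2:ℝ)^p)⁻¹ * (Nat.choose (p+1) j : ℝ) * g j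
      = ∑ k ∈ Finset.range (p+4), (ξ/((p:ℝ)+1) * (((2:ℝ)^p)⁻¹ * (Nat.choose (p+1) k : ℝ))) * g k := by
    rw [Finset.mul_sum]
    refine (Finset.sum_congr rfl fun j _ => by ring).trans
      (Finset.sum_subset (Finset.range_subset_range.mpr (by omega)) ?_)
    intro k hk hnk
    simp only [Finset.mem_range] at hk hnk
    rw [Nat.choose_eq_zero_of_lt (by omega)]
    simp
  have e2 : (((p:ℝ)+2-ξ)/((p:ℝ)+1)) * ∑ j ∈ Finset.range (p+2), ((2:ℝ)^p)⁻¹ * (Nat.choose (p+1) j : ℝ) * g (j+2)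
      = ∑ k ∈ Finset.range (p+4),
          (if 2 ≤ k then (((p:ℝ)+2-ξ)/((p:ℝ)+1)) * (((2:ℝ)^p)⁻¹ * (Nat.choose (p+1) (k-2) : ℝ)) else 0) * g k := by
    rw [show p+4 = (p+2)+2 from rfl,
      shift_sum 2 (p+2) (fun j => (((p:ℝ)+2-ξ)/((p:ℝ)+1)) * (((2:ℝ)^p)⁻¹ * (Nat.choose (p+1) j : ℝ))) g,
      Finset.mul_sum]
    exact Finset.sum_congr rfl fun j _ => by ring
  have e3 : ∑ j ∈ Finset.range (p+3), ((2:ℝ)^(p+1))⁻¹ * (Nat.choose (p+2) j : ℝ) *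
        ((2*ξ-(j:ℝ))/((p:ℝ)+1) * g j + (((p:ℝ)+2-(2*ξ-(j:ℝ)))/((p:ℝ)+1)) * g (j+1))
      = (∑ j ∈ Finset.range (p+3), (((2:ℝ)^(p+1))⁻¹ * (Nat.choose (p+2) j : ℝ) * ((2*ξ-(j:ℝ))/((p:ℝ)+1))) * g j)
        + ∑ j ∈ Finset.range (p+3), (((2:ℝ)^(p+1))⁻¹ * (Nat.choose (p+2) j : ℝ) * (((p:ℝ)+2-(2*ξ-(j:ℝ)))/((p:ℝ)+1))) * g (j+1) := by
    rw [← Finset.sum_add_distrib]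
    exact Finset.sum_congr rfl fun j _ => by ring
  have e4 : (∑ j ∈ Finset.range (p+3), (((2:ℝ)^(p+1))⁻¹ * (Nat.choose (p+2) j : ℝ) * ((2*ξ-(j:ℝ))/((p:ℝ)+1))) * g j)
      = ∑ k ∈ Finset.range (p+4), (((2:ℝ)^(p+1))⁻¹ * (Nat.choose (p+2) k : ℝ) * ((2*ξ-(k:ℝ))/((p:ℝ)+1))) * g k := by
    refine Finset.sum_subset (Finset.range_subset_range.mpr (by omega)) ?_
    intro k hk hnk
    simp only [Finset.mem_range] at hk hnk
    rw [Nat.choose_eq_zero_of_lt (by omega)]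
    simp
  have e5 : ∑ j ∈ Finset.range (p+3), (((2:ℝ)^(p+1))⁻¹ * (Nat.choose (p+2) j : ℝ) * (((p:ℝ)+2-(2*ξ-(j:ℝ)))/((p:ℝ)+1))) * g (j+1)
      = ∑ k ∈ Finset.range (p+4),
          (if 1 ≤ k then ((2:ℝ)^(p+1))⁻¹ * (Nat.choose (p+2) (k-1) : ℝ) * (((p:ℝ)+2-(2*ξ-((k-1 : ℕ):ℝ)))/((p:ℝ)+1)) else 0) * g k := by
    rw [show p+4 = (p+3)+1 from rfl]
    exact (shift_sum 1 (p+3)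
      (fun j => ((2:ℝ)^(p+1))⁻¹ * (Nat.choose (p+2) j : ℝ) * (((p:ℝ)+2-(2*ξ-((j:ℕ):ℝ)))/((p:ℝ)+1))) g).symm
  rw [e1, e2, e3, e4, e5, ← Finset.sum_add_distrib, ← Finset.sum_add_distrib]
  apply Finset.sum_congr rfl
  intro k _
  rw [← add_mul, ← add_mul, coef_eq p ξ k]


/-- Cardinal B-spline of degree `p`, defined by the Cox–de Boor recursion. -/
noncomputable def cardinalBSpline : ℕ → ℝ → ℝ
  | 0, ξ => if 0 ≤ ξ ∧ ξ < 1 then 1 else 0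
  | (p + 1), ξ =>
      (ξ / (p + 1)) * cardinalBSpline p ξ +
      (((p : ℝ) + 2 - ξ) / (p + 1)) * cardinalBSpline p (ξ - 1)

/-- The uniform B-spline two-scale relation:
`B_0^p(ξ) = Σ_{j=0}^{p+1} 2^{-p} C(p+1,j) B_0^p(2ξ - j)`. -/
theorem cardinalBSpline_two_scale (p : ℕ) (ξ : ℝ) :
    cardinalBSpline p ξ =
      ∑ j ∈ Finset.range (p + 2),
        ((2 : ℝ) ^ p)⁻¹ * (Nat.choose (p + 1) j : ℝ) * cardinalBSpline p (2 * ξ - (j : ℝ)) := by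
  induction p generalizing ξ with
  | zero =>
    simp only [cardinalBSpline, Finset.sum_range_succ, Finset.sum_range_zero]
    norm_num
    rcases lt_or_ge ξ 0 with h0 | h0
    · rw [if_neg (fun h => absurd h.1 (by linarith)), if_neg (fun h => absurd h.1 (by linarith)),
        if_neg (fun h => absurd h.1 (by linarith))]
      norm_num
    · rcases lt_or_ge ξ (1/2) with hh | hh
      · rw [if_pos ⟨h0, by linarith⟩, if_pos ⟨h0, by linarith⟩,
          if_neg (fun h => absurd h.1 (by linarith))]
        norm_num
      · rcases lt_or_ge ξ 1 with h1 | h1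
        · rw [if_pos ⟨h0, h1⟩, if_neg (fun h => absurd h.2 (by linarith)),
            if_pos ⟨by linarith, by linarith⟩]
          norm_num
        · rw [if_neg (fun h => absurd h.2 (by linarith)), if_neg (fun h => absurd h.2 (by linarith)),
            if_neg (fun h => absurd h.2 (by linarith))]
          norm_num
  | succ p ih =>
    simp only [cardinalBSpline]
    rw [ih ξ, ih (ξ - 1)]
    have harg : ∑ j ∈ Finset.range (p+2), ((2:ℝ)^p)⁻¹ * (Nat.choose (p+1) j : ℝ) * cardinalBSpline p (2 * (ξ-1) - (j:ℝ))
        = ∑ j ∈ Finset.range (p+2), ((2:ℝ)^p)⁻¹ * (Nat.choose (p+1) j : ℝ) * cardinalBSpline p (2 * ξ - ((j+2 : ℕ):ℝ)) := by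
      refine Finset.sum_congr rfl fun j _ => ?_
      congr 1
      congr 1
      push_cast
      ring
    rw [harg]
    have hrhs : ∀ j : ℕ, cardinalBSpline p (2 * ξ - (j:ℝ) - 1) = cardinalBSpline p (2 * ξ - ((j+1 : ℕ):ℝ)) := by
      intro j; congr 1; push_cast; ring
    calc (ξ / (↑p + 1)) * ∑ j ∈ Finset.range (p+2), ((2:ℝ)^p)⁻¹ * (Nat.choose (p+1) j : ℝ) * cardinalBSpline p (2 * ξ - (j:ℝ))
          + (((p:ℝ) + 2 - ξ) / (↑p + 1)) * ∑ j ∈ Finset.range (p+2), ((2:ℝ)^p)⁻¹ * (Nat.choose (p+1) j : ℝ) * cardinalBSpline p (2 * ξ - ((j+2 : ℕ):ℝ))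
        = ∑ j ∈ Finset.range (p+3), ((2:ℝ)^(p+1))⁻¹ * (Nat.choose (p+2) j : ℝ) *
            ((2*ξ-(j:ℝ))/((p:ℝ)+1) * cardinalBSpline p (2 * ξ - (j:ℝ))
              + (((p:ℝ)+2-(2*ξ-(j:ℝ)))/((p:ℝ)+1) * cardinalBSpline p (2 * ξ - ((j+1 : ℕ):ℝ)))) :=
          key p ξ (fun k => cardinalBSpline p (2 * ξ - (k:ℝ)))
      _ = ∑ j ∈ Finset.range (p+3), ((2:ℝ)^(p+1))⁻¹ * (Nat.choose (p+2) j : ℝ) *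
            ((2*ξ-(j:ℝ)) / (↑p + 1) * cardinalBSpline p (2*ξ-(j:ℝ))
              + ((↑p + 2 - (2*ξ-(j:ℝ))) / (↑p + 1)) * cardinalBSpline p (2*ξ-(j:ℝ) - 1)) := by
          refine Finset.sum_congr rfl fun j _ => ?_
          rw [hrhs j]
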